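/- (Gowers–Cauchy–Schwarz) For each ω ∈ {0,1}^V let f_ω : X → ℝ be bounded and measurable. Then |∫_{X⁺} ∏_{ω∈{0,1}^V} f_ω(x^ω) dμ⁺(x⁺)| ≤ ∏_{ω∈{0,1}^V} ‖f_ω‖_{□^V}. -/

import Mathlib

set_option linter.unusedSectionVars false
set_option maxHeartbeats 1000000


open MeasureTheory

/-- The Gowers box integral `∫_{X⁺} ∏_{ω ∈ {0,1}^V} f(x^ω) dμ⁺`. -/
noncomputable def boxInt {V : Type} [Fintype V] [DecidableEq V]
    (X : V → Type) [∀ v, MeasurableSpace (X v)] (μ : ∀ v, Measure (X v))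
    (f : (∀ v, X v) → ℝ) : ℝ :=
  ∫ x : ∀ p : V × Bool, X p.1,
    ∏ ω : V → Bool, f (fun v => x (v, ω v))
    ∂(Measure.pi fun p : V × Bool => μ p.1)

/-- The Gowers box seminorm `‖f‖_{□^V} = (boxInt f)^{1/2^{|V|}}`. -/
noncomputable def boxNorm {V : Type} [Fintype V] [DecidableEq V]
    (X : V → Type) [∀ v, MeasurableSpace (X v)] (μ : ∀ v, Measure (X v))
    (f : (∀ v, X v) → ℝ) : ℝ :=
  (boxInt X μ f) ^ ((1 : ℝ) / 2 ^ Fintype.card V)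

namespace GCS

variable {V : Type} [Fintype V] [DecidableEq V]
  {X : V → Type} [∀ v, MeasurableSpace (X v)]
  (μ : ∀ v, Measure (X v)) [∀ v, IsProbabilityMeasure (μ v)]

/-- The generalized box integral of a family of functions. -/
noncomputable def gT (F : (V → Bool) → (∀ v, X v) → ℝ) : ℝ :=
  ∫ x : ∀ p : V × Bool, X p.1,
    ∏ ω : V → Bool, F ω (fun v => x (v, ω v))
    ∂(Measure.pi fun p : V × Bool => μ p.1)

/-- The auxiliary space of coordinates away from `v`. -/
abbrev Yt (v : V) := ∀ q : {q : V × Bool // ¬ q.1 = v}, X q.1.1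

def build (v : V) (ω : V → Bool) (y : Yt (X := X) v) (t : X v) : ∀ u, X u :=
  fun u => if h : u = v then cast (congrArg X h.symm) t else y ⟨(u, ω u), h⟩

lemma build_congr {v : V} {ω ω' : V → Bool} (h : ∀ u, u ≠ v → ω u = ω' u)
    (y : Yt (X := X) v) (t : X v) : build v ω y t = build v ω' y t := by
  funext u
  by_cases hu : u = v
  · simp [build, hu]
  · simp only [build, dif_neg hu]
    rw [h u hu]

lemma build_self (v : V) (ω : V → Bool) (y : Yt (X := X) v) (t : X v) :
    build v ω y t v = t := by
  show dite (v = v) (fun h => cast (congrArg X h.symm) t) (fun h => y ⟨(v, ω v), h⟩) = t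
  rw [dif_pos rfl]
  exact cast_eq _ t

lemma measurable_build (v : V) (ω : V → Bool) :
    Measurable (fun p : Yt (X := X) v × X v => build v ω p.1 p.2) := by
  apply measurable_pi_lambda
  intro u
  by_cases h : u = v
  · subst h
    have : (fun p : Yt (X := X) u × X u => build u ω p.1 p.2 u) = fun p => p.2 := by
      funext p; exact build_self u ω p.1 p.2
    rw [this]; exact measurable_snd
  · have : (fun p : Yt (X := X) v × X v => build v ω p.1 p.2 u)
        = fun p => p.1 ⟨(u, ω u), h⟩ := by
      funext p; simp [build, h]
    rw [this]
    exact (measurable_pi_apply _).comp measurable_fst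


noncomputable def gA (v : V) (F : (V → Bool) → (∀ u, X u) → ℝ) (b : Bool)
    (y : Yt (X := X) v) (t : X v) : ℝ :=
  ∏ ω ∈ Finset.univ.filter (fun ω : V → Bool => ω v = b), F ω (build v ω y t)

noncomputable def gP (v : V) (F : (V → Bool) → (∀ u, X u) → ℝ) (b : Bool)
    (y : Yt (X := X) v) : ℝ :=
  ∫ t, gA v F b y t ∂(μ v)

lemma prod_bound {F : (V → Bool) → (∀ u, X u) → ℝ} {C : ℝ}
    (hC : ∀ ω x, |F ω x| ≤ C) (s : Finset (V → Bool)) (g : (V → Bool) → ∀ u, X u) :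
    |∏ ω ∈ s, F ω (g ω)| ≤ (max C 1) ^ (2 ^ Fintype.card V) := by
  calc |∏ ω ∈ s, F ω (g ω)| = ∏ ω ∈ s, |F ω (g ω)| := Finset.abs_prod s _
    _ ≤ ∏ _ω ∈ s, (max C 1) := by
        exact Finset.prod_le_prod (fun ω _ => abs_nonneg _)
          (fun ω _ => (hC ω (g ω)).trans (le_max_left _ _))
    _ = (max C 1) ^ s.card := Finset.prod_const _
    _ ≤ (max C 1) ^ (2 ^ Fintype.card V) := by
        apply pow_le_pow_right₀ (le_max_right _ _)
        calc s.card ≤ Finset.univ.card := Finset.card_le_card (Finset.subset_univ s)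
          _ = Fintype.card (V → Bool) := Finset.card_univ
          _ = 2 ^ Fintype.card V := by
              rw [Fintype.card_fun, Fintype.card_bool]

lemma measurable_gA (v : V) {F : (V → Bool) → (∀ u, X u) → ℝ}
    (hm : ∀ ω, Measurable (F ω)) (b : Bool) :
    Measurable (fun p : Yt (X := X) v × X v => gA v F b p.1 p.2) :=
  Finset.measurable_prod _ fun ω _ => (hm ω).comp (measurable_build v ω)

lemma gA_bound (v : V) {F : (V → Bool) → (∀ u, X u) → ℝ} {C : ℝ}
    (hC : ∀ ω x, |F ω x| ≤ C) (b : Bool) (y : Yt (X := X) v) (t : X v) :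
    |gA v F b y t| ≤ (max C 1) ^ (2 ^ Fintype.card V) :=
  prod_bound hC _ _

lemma gA_swap (v : V) (F : (V → Bool) → (∀ u, X u) → ℝ) (b b' : Bool)
    (y : Yt (X := X) v) (t : X v) :
    gA v (fun ω => F (Function.update ω v b)) b' y t = gA v F b y t := by
  unfold gA
  refine Finset.prod_nbij' (fun ω => Function.update ω v b)
    (fun σ => Function.update σ v b') ?_ ?_ ?_ ?_ ?_
  · intro ω hω
    simp [Function.update_self]
  · intro σ hσ
    simp [Function.update_self]
  · intro ω hω
    simp only [Finset.mem_filter, Finset.mem_univ, true_and] at hω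
    show Function.update (Function.update ω v b) v b' = ω
    rw [Function.update_idem, ← hω, Function.update_eq_self]
  · intro σ hσ
    simp only [Finset.mem_filter, Finset.mem_univ, true_and] at hσ
    show Function.update (Function.update σ v b') v b = σ
    rw [Function.update_idem, ← hσ, Function.update_eq_self]
  · intro ω hω
    congr 1
    exact build_congr (fun u hu => (Function.update_of_ne hu b ω).symm) y t

lemma stronglyMeasurable_gP (v : V) {F : (V → Bool) → (∀ u, X u) → ℝ}
    (hm : ∀ ω, Measurable (F ω)) (b : Bool) :
    StronglyMeasurable (fun y => gP μ v F b y) :=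
  (measurable_gA v hm b).stronglyMeasurable.integral_prod_right'

lemma gP_bound (v : V) {F : (V → Bool) → (∀ u, X u) → ℝ} {C : ℝ}
    (hC : ∀ ω x, |F ω x| ≤ C) (b : Bool) (y : Yt (X := X) v) :
    ‖gP μ v F b y‖ ≤ (max C 1) ^ (2 ^ Fintype.card V) := by
  have h := norm_integral_le_of_norm_le_const
    (C := (max C 1) ^ (2 ^ Fintype.card V)) (μ := μ v)
    (f := fun t => gA v F b y t)
    (Filter.Eventually.of_forall fun t => by
      rw [Real.norm_eq_abs]; exact gA_bound v hC b y t)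
  simpa [measure_univ, gP] using h


lemma integral_bool_prod {T : Type} [MeasurableSpace T] (ν : Measure T)
    [IsProbabilityMeasure ν] (h : Bool → T → ℝ) :
    ∫ w : Bool → T, (h false (w false)) * (h true (w true)) ∂(Measure.pi fun _ => ν)
      = (∫ t, h false t ∂ν) * (∫ t, h true t ∂ν) := by
  letI : MeasureSpace T := { volume := ν }
  haveI : SigmaFinite (volume : Measure T) := (inferInstance : SigmaFinite ν)
  have h2 := MeasureTheory.integral_fintype_prod_eq_prod (𝕜 := ℝ) (ι := Bool) (fun b => h b) (μ := fun _ => ν)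
  rw [Fintype.prod_bool] at h2
  have hm : (volume : Measure (Bool → T)) = Measure.pi fun _ => ν := rfl
  rw [show (∫ w : Bool → T, h false (w false) * h true (w true) ∂(Measure.pi fun _ => ν))
      = ∫ w : Bool → T, ∏ b, h b (w b) ∂(Measure.pi fun _ => ν) by
    refine integral_congr_ae (Filter.Eventually.of_forall fun w => ?_)
    show h false (w false) * h true (w true) = ∏ b : Bool, h b (w b)
    rw [Fintype.prod_bool, mul_comm]]
  rw [h2, mul_comm]

lemma measurable_gI {F : (V → Bool) → (∀ u, X u) → ℝ} (hm : ∀ ω, Measurable (F ω)) :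
    Measurable (fun x : ∀ p : V × Bool, X p.1 => ∏ ω : V → Bool, F ω (fun u => x (u, ω u))) :=
  Finset.measurable_prod _ fun ω _ => (hm ω).comp
    (measurable_pi_lambda _ fun _u => measurable_pi_apply _)

lemma decomp (v : V) (F : (V → Bool) → (∀ u, X u) → ℝ) {C : ℝ}
    (hC : ∀ ω x, |F ω x| ≤ C) (hm : ∀ ω, Measurable (F ω)) :
    gT μ F = ∫ y, gP μ v F false y * gP μ v F true y
      ∂(Measure.pi fun q : {q : V × Bool // ¬ q.1 = v} => μ q.1.1) := by
  classical
  let eb : Bool ≃ {q : V × Bool // q.1 = v} :=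
    { toFun := fun b => ⟨(v, b), rfl⟩
      invFun := fun i => i.1.2
      left_inv := fun _b => rfl
      right_inv := by rintro ⟨⟨u, b⟩, (h : u = v)⟩; subst h; rfl }
  have MP1 := measurePreserving_piEquivPiSubtypeProd
    (fun q : V × Bool => μ q.1) (fun q : V × Bool => q.1 = v)
  set Φ₁ := MeasurableEquiv.piEquivPiSubtypeProd
    (fun q : V × Bool => X q.1) (fun q : V × Bool => q.1 = v) with hΦ₁
  have MP2 := measurePreserving_piCongrLeft
    (fun i : {q : V × Bool // q.1 = v} => μ i.1.1) eb
  set Φ₂ := MeasurableEquiv.piCongrLeft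
    (fun i : {q : V × Bool // q.1 = v} => X i.1.1) eb with hΦ₂
  set G : ((∀ i : {q : V × Bool // q.1 = v}, X i.1.1) ×
      (∀ i : {q : V × Bool // ¬ q.1 = v}, X i.1.1)) → ℝ :=
    fun z => ∏ ω : V → Bool, F ω (fun u => Φ₁.symm z (u, ω u)) with hG
  have step1 : gT μ F = ∫ z, G z
      ∂((Measure.pi fun i : {q : V × Bool // q.1 = v} => μ i.1.1).prod
        (Measure.pi fun i : {q : V × Bool // ¬ q.1 = v} => μ i.1.1)) := by
    rw [gT, ← MP1.integral_comp Φ₁.measurableEmbedding G]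
    refine integral_congr_ae (Filter.Eventually.of_forall fun x => ?_)
    simp only [hG, MeasurableEquiv.symm_apply_apply]
  have hGm : Measurable G := by
    apply Finset.measurable_prod
    intro ω _
    exact (hm ω).comp (measurable_pi_lambda _ fun _u =>
      (measurable_pi_apply _).comp Φ₁.symm.measurable)
  have hint : Integrable G
      ((Measure.pi fun i : {q : V × Bool // q.1 = v} => μ i.1.1).prod
        (Measure.pi fun i : {q : V × Bool // ¬ q.1 = v} => μ i.1.1)) := by
    refine ⟨hGm.aestronglyMeasurable, ?_⟩
    apply HasFiniteIntegral.of_bounded (C := (max C 1) ^ (2 ^ Fintype.card V))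
    exact Filter.Eventually.of_forall fun z => by
      rw [Real.norm_eq_abs]; exact prod_bound hC _ _
  rw [step1, integral_prod_symm _ hint]
  refine integral_congr_ae (Filter.Eventually.of_forall fun y => ?_)
  show (∫ z, G (z, y) ∂(Measure.pi fun i : {q : V × Bool // q.1 = v} => μ i.1.1))
      = gP μ v F false y * gP μ v F true y
  rw [← MP2.integral_comp Φ₂.measurableEmbedding (fun z => G (z, y))]
  have hpt : ∀ w : ∀ b : Bool, X v,
      G (Φ₂ w, y) = gA v F false y (w false) * gA v F true y (w true) := by
    intro w
    have hx : ∀ ω : V → Bool,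
        (fun u => Φ₁.symm (Φ₂ w, y) (u, ω u)) = build v ω y (w (ω v)) := by
      intro ω; funext u
      by_cases h : u = v
      · subst h
        have h1 : Φ₁.symm (Φ₂ w, y) (u, ω u) = Φ₂ w ⟨(u, ω u), rfl⟩ := by
          simp only [hΦ₁, MeasurableEquiv.piEquivPiSubtypeProd_symm_apply]
          exact dif_pos trivial
        rw [h1, build_self]
        exact MeasurableEquiv.piCongrLeft_apply_apply
          (β := fun i : {q : V × Bool // q.1 = u} => X i.1.1) eb w (ω u)
      · have h1 : Φ₁.symm (Φ₂ w, y) (u, ω u) = y ⟨(u, ω u), h⟩ := by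
          simp only [hΦ₁, MeasurableEquiv.piEquivPiSubtypeProd_symm_apply]
          exact dif_neg h
        rw [h1]
        simp [build, h]
    rw [hG]
    simp only [hx]
    rw [← Finset.prod_filter_mul_prod_filter_not Finset.univ (fun ω : V → Bool => ω v = false)]
    congr 1
    · refine Finset.prod_congr rfl fun ω hω => ?_
      simp only [Finset.mem_filter, Finset.mem_univ, true_and] at hω
      rw [hω]
    · rw [show Finset.univ.filter (fun ω : V → Bool => ¬ ω v = false)
          = Finset.univ.filter (fun ω : V → Bool => ω v = true) by
        apply Finset.filter_congr; intro ω _; simp]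
      refine Finset.prod_congr rfl fun ω hω => ?_
      simp only [Finset.mem_filter, Finset.mem_univ, true_and] at hω
      rw [hω]
  rw [show (fun w => G (Φ₂ w, y)) = fun w : ∀ _ : Bool, X v =>
      gA v F false y (w false) * gA v F true y (w true) from funext hpt]
  exact integral_bool_prod (μ v) (fun b => gA v F b y)


lemma gP_update (v : V) (F : (V → Bool) → (∀ u, X u) → ℝ) (b b' : Bool) :
    gP μ v (fun ω => F (Function.update ω v b)) b' = gP μ v F b := by
  funext y
  unfold gP
  refine integral_congr_ae (Filter.Eventually.of_forall fun t => ?_)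
  exact gA_swap v F b b' y t

lemma memL2_gP (v : V) {F : (V → Bool) → (∀ u, X u) → ℝ} {C : ℝ}
    (hC : ∀ ω x, |F ω x| ≤ C) (hm : ∀ ω, Measurable (F ω)) (b : Bool) :
    MemLp (gP μ v F b) (ENNReal.ofReal 2)
      (Measure.pi fun q : {q : V × Bool // ¬ q.1 = v} => μ q.1.1) :=
  (memLp_top_of_bound (stronglyMeasurable_gP μ v hm b).aestronglyMeasurable
    ((max C 1) ^ (2 ^ Fintype.card V))
    (Filter.Eventually.of_forall fun y => gP_bound μ v hC b y)).mono_exponent le_top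

lemma onestep (v : V) (F : (V → Bool) → (∀ u, X u) → ℝ) {C : ℝ}
    (hC : ∀ ω x, |F ω x| ≤ C) (hm : ∀ ω, Measurable (F ω)) :
    |gT μ F| ≤ |gT μ (fun ω => F (Function.update ω v false))| ^ ((1:ℝ)/2)
      * |gT μ (fun ω => F (Function.update ω v true))| ^ ((1:ℝ)/2) := by
  set ν := Measure.pi fun q : {q : V × Bool // ¬ q.1 = v} => μ q.1.1 with hν
  have hTb : ∀ b : Bool, gT μ (fun ω => F (Function.update ω v b))
      = ∫ y, gP μ v F b y * gP μ v F b y ∂ν := by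
    intro b
    rw [decomp μ v (fun ω => F (Function.update ω v b)) (fun ω x => hC _ x) (fun ω => hm _),
      gP_update μ v F b false, gP_update μ v F b true]
  have habs : ∀ b : Bool, |gT μ (fun ω => F (Function.update ω v b))|
      = ∫ y, gP μ v F b y * gP μ v F b y ∂ν := by
    intro b
    rw [hTb b]
    exact abs_of_nonneg (integral_nonneg fun y => mul_self_nonneg _)
  have hsq : ∀ b : Bool, (∫ y, ‖gP μ v F b y‖ ^ (2:ℝ) ∂ν)
      = ∫ y, gP μ v F b y * gP μ v F b y ∂ν := by
    intro b
    refine integral_congr_ae (Filter.Eventually.of_forall fun y => ?_)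
    show ‖gP μ v F b y‖ ^ (2:ℝ) = gP μ v F b y * gP μ v F b y
    rw [show (2:ℝ) = ((2:ℕ):ℝ) by norm_num, Real.rpow_natCast, Real.norm_eq_abs, sq_abs, sq]
  have hcs := integral_mul_norm_le_Lp_mul_Lq (μ := ν)
    (f := gP μ v F false) (g := gP μ v F true) (p := 2) (q := 2)
    ⟨by norm_num, by norm_num, by norm_num⟩ (memL2_gP μ v hC hm false) (memL2_gP μ v hC hm true)
  rw [decomp μ v F hC hm, ← hν]
  calc |∫ y, gP μ v F false y * gP μ v F true y ∂ν|
      ≤ ∫ y, ‖gP μ v F false y * gP μ v F true y‖ ∂ν := by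
        rw [← Real.norm_eq_abs]
        exact norm_integral_le_integral_norm _
    _ = ∫ y, ‖gP μ v F false y‖ * ‖gP μ v F true y‖ ∂ν := by
        refine integral_congr_ae (Filter.Eventually.of_forall fun y => ?_)
        exact norm_mul _ _
    _ ≤ (∫ y, ‖gP μ v F false y‖ ^ (2:ℝ) ∂ν) ^ ((1:ℝ)/2)
        * (∫ y, ‖gP μ v F true y‖ ^ (2:ℝ) ∂ν) ^ ((1:ℝ)/2) := hcs
    _ = |gT μ (fun ω => F (Function.update ω v false))| ^ ((1:ℝ)/2)
        * |gT μ (fun ω => F (Function.update ω v true))| ^ ((1:ℝ)/2) := by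
        rw [hsq false, hsq true, habs false, habs true]

lemma gT_const_nonneg [Nonempty V] (f : (∀ u, X u) → ℝ) {C : ℝ}
    (hC : ∀ x, |f x| ≤ C) (hm : Measurable f) :
    0 ≤ gT μ (fun _ : V → Bool => f) := by
  obtain ⟨v⟩ := (inferInstance : Nonempty V)
  rw [decomp μ v (fun _ : V → Bool => f) (fun _ x => hC x) (fun _ => hm)]
  have h1 : gP μ v (fun _ : V → Bool => f) true = gP μ v (fun _ : V → Bool => f) false :=
    gP_update μ v (fun _ : V → Bool => f) false true
  rw [h1]
  exact integral_nonneg fun y => mul_self_nonneg _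


lemma prod_update (v : V) (g : (V → Bool) → ℝ) (c : Bool) :
    ∏ τ : V → Bool, g (Function.update τ v c)
      = (∏ σ ∈ Finset.univ.filter (fun σ : V → Bool => σ v = c), g σ) ^ 2 := by
  classical
  have h1 : ∀ d : Bool,
      ∏ τ ∈ Finset.univ.filter (fun τ : V → Bool => τ v = d), g (Function.update τ v c)
        = ∏ σ ∈ Finset.univ.filter (fun σ : V → Bool => σ v = c), g σ := by
    intro d
    refine Finset.prod_nbij' (fun τ => Function.update τ v c)
      (fun σ => Function.update σ v d) ?_ ?_ ?_ ?_ ?_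
    · intro τ _; simp [Function.update_self]
    · intro σ _; simp [Function.update_self]
    · intro τ hτ
      simp only [Finset.mem_filter, Finset.mem_univ, true_and] at hτ
      show Function.update (Function.update τ v c) v d = τ
      rw [Function.update_idem, ← hτ, Function.update_eq_self]
    · intro σ hσ
      simp only [Finset.mem_filter, Finset.mem_univ, true_and] at hσ
      show Function.update (Function.update σ v d) v c = σ
      rw [Function.update_idem, ← hσ, Function.update_eq_self]
    · intro τ _; rfl
  rw [← Finset.prod_filter_mul_prod_filter_not Finset.univ (fun τ : V → Bool => τ v = false)]
  rw [show Finset.univ.filter (fun τ : V → Bool => ¬ τ v = false)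
      = Finset.univ.filter (fun τ : V → Bool => τ v = true) from
    Finset.filter_congr fun τ _ => by simp]
  rw [h1 false, h1 true, sq]

lemma prod_update_mul (v : V) (g : (V → Bool) → ℝ) :
    (∏ τ : V → Bool, g (Function.update τ v false))
      * (∏ τ : V → Bool, g (Function.update τ v true))
      = ∏ σ : V → Bool, (g σ) ^ 2 := by
  classical
  rw [prod_update v g false, prod_update v g true, ← mul_pow]
  rw [show Finset.univ.filter (fun σ : V → Bool => σ v = true)
      = Finset.univ.filter (fun σ : V → Bool => ¬ σ v = false) from
    Finset.filter_congr fun τ _ => by simp]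
  rw [Finset.prod_filter_mul_prod_filter_not Finset.univ (fun σ : V → Bool => σ v = false)]
  rw [← Finset.prod_pow]

lemma key [Nonempty V] (F : (V → Bool) → (∀ u, X u) → ℝ) {C : ℝ}
    (hC : ∀ ω x, |F ω x| ≤ C) (hm : ∀ ω, Measurable (F ω)) (S : Finset V) :
    |gT μ F| ≤ ∏ τ : V → Bool,
      |gT μ (fun ω => F (fun u => if u ∈ S then τ u else ω u))|
        ^ ((1:ℝ)/2 ^ Fintype.card V) := by
  classical
  induction S using Finset.induction with
  | empty =>
      have he : ∀ τ : V → Bool,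
          (fun ω : V → Bool => F (fun u => if u ∈ (∅ : Finset V) then τ u else ω u)) = F := by
        intro τ; funext ω; simp
      simp only [he]
      rw [Finset.prod_const, Finset.card_univ, Fintype.card_fun, Fintype.card_bool]
      rw [← Real.rpow_natCast (|gT μ F| ^ ((1:ℝ)/2 ^ Fintype.card V)) (2 ^ Fintype.card V),
        ← Real.rpow_mul (abs_nonneg _)]
      rw [show ((1:ℝ)/2 ^ Fintype.card V) * ((2 ^ Fintype.card V : ℕ) : ℝ) = 1 by
        push_cast
        field_simp]
      rw [Real.rpow_one]
  | @insert v S hv ih =>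
      have hstep : ∀ τ : V → Bool,
          |gT μ (fun ω => F (fun u => if u ∈ S then τ u else ω u))|
            ≤ |gT μ (fun ω => F (fun u => if u ∈ insert v S
                then (Function.update τ v false) u else ω u))| ^ ((1:ℝ)/2)
              * |gT μ (fun ω => F (fun u => if u ∈ insert v S
                then (Function.update τ v true) u else ω u))| ^ ((1:ℝ)/2) := by
        intro τ
        have h1 := onestep μ v (fun ω => F (fun u => if u ∈ S then τ u else ω u))
          (fun ω x => hC _ x) (fun ω => hm _)
        have h2 : ∀ bb : Bool,
            (fun ω => F (fun u => if u ∈ S then τ u else (Function.update ω v bb) u))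
              = fun ω => F (fun u => if u ∈ insert v S
                  then (Function.update τ v bb) u else ω u) := by
          intro bb; funext ω
          have harg : (fun u => if u ∈ S then τ u else (Function.update ω v bb) u)
              = (fun u => if u ∈ insert v S then (Function.update τ v bb) u else ω u) := by
            funext u
            by_cases h1' : u = v
            · subst h1'
              simp [hv, Function.update_self, Finset.mem_insert]
            · by_cases h2' : u ∈ S
              · simp [h2', Finset.mem_insert, h1', Function.update_of_ne h1']
              · simp [h2', Finset.mem_insert, h1', Function.update_of_ne h1']
          rw [harg]
        rw [h2 false, h2 true] at h1
        exact h1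
      refine ih.trans ?_
      have step2 : ∏ τ : V → Bool,
            |gT μ (fun ω => F (fun u => if u ∈ S then τ u else ω u))|
              ^ ((1:ℝ)/2 ^ Fintype.card V)
          ≤ ∏ τ : V → Bool,
            (|gT μ (fun ω => F (fun u => if u ∈ insert v S
                then (Function.update τ v false) u else ω u))| ^ ((1:ℝ)/2)
              * |gT μ (fun ω => F (fun u => if u ∈ insert v S
                then (Function.update τ v true) u else ω u))| ^ ((1:ℝ)/2))
              ^ ((1:ℝ)/2 ^ Fintype.card V) := by
        refine Finset.prod_le_prod (fun τ _ => Real.rpow_nonneg (abs_nonneg _) _)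
          (fun τ _ => ?_)
        exact Real.rpow_le_rpow (abs_nonneg _) (hstep τ) (by positivity)
      refine step2.trans (le_of_eq ?_)
      set a : (V → Bool) → ℝ := fun σ =>
        |gT μ (fun ω => F (fun u => if u ∈ insert v S then σ u else ω u))| with ha
      have ha0 : ∀ σ, 0 ≤ a σ := fun σ => abs_nonneg _
      have h3 : ∀ τ : V → Bool,
          (a (Function.update τ v false) ^ ((1:ℝ)/2)
            * a (Function.update τ v true) ^ ((1:ℝ)/2)) ^ ((1:ℝ)/2 ^ Fintype.card V)
          = (fun σ => a σ ^ (((1:ℝ)/2 ^ Fintype.card V)/2)) (Function.update τ v false)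
            * (fun σ => a σ ^ (((1:ℝ)/2 ^ Fintype.card V)/2)) (Function.update τ v true) := by
        intro τ
        rw [Real.mul_rpow (Real.rpow_nonneg (ha0 _) _) (Real.rpow_nonneg (ha0 _) _),
          ← Real.rpow_mul (ha0 _), ← Real.rpow_mul (ha0 _)]
        rw [show ((1:ℝ)/2) * ((1:ℝ)/2 ^ Fintype.card V) = ((1:ℝ)/2 ^ Fintype.card V)/2 by ring]
      calc ∏ τ : V → Bool,
            (a (Function.update τ v false) ^ ((1:ℝ)/2)
              * a (Function.update τ v true) ^ ((1:ℝ)/2)) ^ ((1:ℝ)/2 ^ Fintype.card V)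
          = ∏ τ : V → Bool,
            (fun σ => a σ ^ (((1:ℝ)/2 ^ Fintype.card V)/2)) (Function.update τ v false)
              * (fun σ => a σ ^ (((1:ℝ)/2 ^ Fintype.card V)/2)) (Function.update τ v true) :=
            Finset.prod_congr rfl fun τ _ => h3 τ
        _ = (∏ τ : V → Bool,
              (fun σ => a σ ^ (((1:ℝ)/2 ^ Fintype.card V)/2)) (Function.update τ v false))
            * ∏ τ : V → Bool,
              (fun σ => a σ ^ (((1:ℝ)/2 ^ Fintype.card V)/2)) (Function.update τ v true) :=
            Finset.prod_mul_distrib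
        _ = ∏ σ : V → Bool, (a σ ^ (((1:ℝ)/2 ^ Fintype.card V)/2)) ^ 2 :=
            prod_update_mul v (fun σ => a σ ^ (((1:ℝ)/2 ^ Fintype.card V)/2))
        _ = ∏ σ : V → Bool, a σ ^ ((1:ℝ)/2 ^ Fintype.card V) := by
            refine Finset.prod_congr rfl fun σ _ => ?_
            rw [← Real.rpow_natCast (a σ ^ (((1:ℝ)/2 ^ Fintype.card V)/2)) 2,
              ← Real.rpow_mul (ha0 σ)]
            norm_num

end GCS

/-- **Gowers–Cauchy–Schwarz.** -/
theorem gowers_cauchy_schwarz (V : Type) [Fintype V] [DecidableEq V] [Nonempty V]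
    (X : V → Type) [∀ v, MeasurableSpace (X v)]
    (μ : ∀ v, Measure (X v)) [∀ v, IsProbabilityMeasure (μ v)]
    (f : (V → Bool) → (∀ v, X v) → ℝ)
    (hfb : ∀ ω, ∃ C, ∀ x, |f ω x| ≤ C) (hfm : ∀ ω, Measurable (f ω)) :
    |∫ x : ∀ p : V × Bool, X p.1,
        ∏ ω : V → Bool, f ω (fun v => x (v, ω v))
        ∂(Measure.pi fun p : V × Bool => μ p.1)|
      ≤ ∏ ω : V → Bool, boxNorm X μ (f ω) := by
  classical
  obtain ⟨C, hC⟩ : ∃ C : ℝ, ∀ ω x, |f ω x| ≤ C := by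
    choose Cf hCf using hfb
    refine ⟨Finset.univ.sup' Finset.univ_nonempty Cf, fun ω x => ?_⟩
    exact (hCf ω x).trans (Finset.le_sup' Cf (Finset.mem_univ ω))
  have h := GCS.key μ f hC hfm Finset.univ
  have he : ∀ τ : V → Bool,
      (fun ω : V → Bool => f (fun u => if u ∈ (Finset.univ : Finset V) then τ u else ω u))
        = fun _ : V → Bool => f τ := by
    intro τ; funext ω; simp
  simp only [he] at h
  have h2 : ∀ τ : V → Bool,
      |GCS.gT μ (fun _ : V → Bool => f τ)| ^ ((1:ℝ)/2 ^ Fintype.card V)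
        = boxNorm X μ (f τ) := by
    intro τ
    have h0 : 0 ≤ GCS.gT μ (fun _ : V → Bool => f τ) :=
      GCS.gT_const_nonneg μ (f τ) (hC τ) (hfm τ)
    rw [abs_of_nonneg h0]
    rfl
  rw [show (∏ ω : V → Bool, boxNorm X μ (f ω))
      = ∏ τ : V → Bool, |GCS.gT μ (fun _ : V → Bool => f τ)| ^ ((1:ℝ)/2 ^ Fintype.card V)
    from Finset.prod_congr rfl fun τ _ => (h2 τ).symm]
  exact h
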